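/- If f, α : ℝ → ℝ satisfy f(x+y) - f(x)·f(y) = α(x+y) for all x, y ∈ ℝ, then there exists a function m : ℝ → ℝ with m(x+y) = m(x)·m(y) for all x, y, and f(x) = f(1)·m(x), α(x) = f(1)·(1 - f(1))·m(x) for all x ∈ ℝ. -/

import Mathlib

theorem stmt_13 (f α : ℝ → ℝ)
    (hf : ∀ x y : ℝ, f (x + y) - f x * f y = α (x + y)) :
    ∃ m : ℝ → ℝ, (∀ x y, m (x + y) = m x * m y) ∧
      (∀ x, f x = f 0 * m x) ∧ ∀ x, α x = f 0 * (1 - f 0) * m x := by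
  set c := f 0 with hc
  have halpha : ∀ x, α x = f x * (1 - c) := by
    intro x
    have := hf x 0
    rw [add_zero] at this
    rw [← this]; ring
  have hmul : ∀ x y, f x * f y = c * f (x + y) := by
    intro x y
    have h1 := hf x y
    rw [halpha (x + y)] at h1
    nlinarith [h1]
  by_cases hc0 : c = 0
  · have hf0 : ∀ x, f x = 0 := by
      intro x
      have := hmul x x
      rw [hc0, zero_mul] at this
      nlinarith
    refine ⟨fun _ => 1, by intro x y; ring, ?_, ?_⟩
    · intro x; rw [hf0 x, hc0]; ring
    · intro x; rw [halpha x, hf0 x, hc0]; ring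
  · refine ⟨fun x => f x / c, ?_, ?_, ?_⟩
    · intro x y
      field_simp
      have := hmul x y
      linear_combination -this
    · intro x; field_simp
    · intro x; rw [halpha x]; field_simp
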